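/- Let G be a connected graph with n vertices and L a list-assignment with |L(v)| ≥ deg(v)+1 for all vertices v and |L(w)| ≥ deg(w)+2 for some vertex w. Then any two proper L-colourings of G are connected by a sequence of at most (3n² + 5n)/2 single-vertex recolourings. -/

import Mathlib

open Classical Function

/-- A proper list colouring. -/
def properL {V : Type*} (G : SimpleGraph V) (L : V → Finset ℕ) (c : V → ℕ) : Prop :=
  (∀ v, c v ∈ L v) ∧ ∀ ⦃u w⦄, G.Adj u w → c u ≠ c w

/-- A single-vertex recolouring step between proper `L`-colourings. -/
def recolStep {V : Type*} (G : SimpleGraph V) (L : V → Finset ℕ) (c c' : V → ℕ) : Prop :=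
  properL G L c ∧ properL G L c' ∧ ∃ x, c x ≠ c' x ∧ ∀ u, u ≠ x → c u = c' u

section Infra

variable {V : Type*} {G : SimpleGraph V} {L : V → Finset ℕ}

/-- A sequence of `k` recolouring steps from `c` to `c'`. -/
def RSeq (G : SimpleGraph V) (L : V → Finset ℕ) (k : ℕ) (c c' : V → ℕ) : Prop :=
  ∃ f : ℕ → V → ℕ, f 0 = c ∧ f k = c' ∧ ∀ i < k, recolStep G L (f i) (f (i + 1))

lemma RSeq.zero (c : V → ℕ) : RSeq G L 0 c c := ⟨fun _ => c, rfl, rfl, by omega⟩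

lemma RSeq.single {c c' : V → ℕ} (h : recolStep G L c c') : RSeq G L 1 c c' := by
  refine ⟨fun i => if i = 0 then c else c', by simp, by simp, ?_⟩
  intro i hi
  interval_cases i
  simpa using h

lemma RSeq.trans {k₁ k₂ : ℕ} {c c' c'' : V → ℕ} (h₁ : RSeq G L k₁ c c')
    (h₂ : RSeq G L k₂ c' c'') : RSeq G L (k₁ + k₂) c c'' := by
  obtain ⟨f₁, hf₁0, hf₁k, hf₁⟩ := h₁
  obtain ⟨f₂, hf₂0, hf₂k, hf₂⟩ := h₂
  refine ⟨fun i => if i < k₁ then f₁ i else f₂ (i - k₁), ?_, ?_, ?_⟩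
  · by_cases h : 0 < k₁
    · simp [h, hf₁0]
    · have hk : k₁ = 0 := by omega
      subst hk
      show f₂ (0 - 0) = c
      rw [Nat.sub_zero, hf₂0, ← hf₁k, hf₁0]
  · by_cases h : k₁ + k₂ < k₁
    · simp only [if_pos h]; omega
    · simp only [if_neg h]; rw [Nat.add_sub_cancel_left, hf₂k]
  · intro i hi
    by_cases h : i + 1 < k₁
    · have : i < k₁ := by omega
      simp only [if_pos h, if_pos this]
      exact hf₁ i this
    · by_cases h' : i < k₁
      · have hik : i + 1 = k₁ := by omega
        simp only [if_neg h, if_pos h']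
        rw [show i + 1 - k₁ = 0 from by omega, hf₂0, ← hf₁k, ← hik]
        exact hf₁ i h'
      · simp only [if_neg h, if_neg h']
        have : i - k₁ + 1 = i + 1 - k₁ := by omega
        rw [← this]
        exact hf₂ (i - k₁) (by omega)

lemma recolStep.symm {c c' : V → ℕ} (h : recolStep G L c c') : recolStep G L c' c := by
  obtain ⟨h1, h2, x, hx, ho⟩ := h
  exact ⟨h2, h1, x, hx.symm, fun u hu => (ho u hu).symm⟩

lemma RSeq.symm {k : ℕ} {c c' : V → ℕ} (h : RSeq G L k c c') : RSeq G L k c' c := by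
  obtain ⟨f, hf0, hfk, hf⟩ := h
  refine ⟨fun i => f (k - i), by simp [hfk], by simp [hf0], ?_⟩
  intro i hi
  have h1 : k - i = (k - (i + 1)) + 1 := by omega
  simp only []
  rw [h1]
  exact (hf (k - (i + 1)) (by omega)).symm

/-- Recolouring one vertex to a colour in its list not used on its neighbours. -/
lemma properL.update {c : V → ℕ} (hc : properL G L c) {x : V} {a : ℕ}
    (haL : a ∈ L x) (ha : ∀ y, G.Adj x y → a ≠ c y) :
    properL G L (Function.update c x a) := by
  constructor
  · intro v
    by_cases hv : v = x
    · subst hv; simpa using haL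
    · simpa [Function.update_of_ne hv] using hc.1 v
  · intro p q hpq
    by_cases hp : p = x
    · subst hp
      have hq : q ≠ p := fun h => G.ne_of_adj hpq h.symm
      simpa [Function.update_of_ne hq] using ha q hpq
    · by_cases hq : q = x
      · subst hq
        simp only [Function.update_of_ne hp, Function.update_self]
        exact fun h => ha p (G.adj_symm hpq) h.symm
      · simpa [Function.update_of_ne hp, Function.update_of_ne hq] using hc.2 hpq

lemma recolStep_update {c : V → ℕ} (hc : properL G L c) {x : V} {a : ℕ}
    (haL : a ∈ L x) (hne : a ≠ c x) (ha : ∀ y, G.Adj x y → a ≠ c y) :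
    recolStep G L c (Function.update c x a) := by
  refine ⟨hc, hc.update haL ha, x, ?_, ?_⟩
  · simpa using fun h => hne h.symm
  · intro u hu; simp [Function.update_of_ne hu]

end Infra

section Dist

variable {V : Type*} {G : SimpleGraph V}

lemma adj_dist_le {x y w : V} (hG : G.Connected) (hxy : G.Adj x y) :
    G.dist x w ≤ G.dist y w + 1 := by
  have h1 : G.dist x y ≤ 1 := by
    have := SimpleGraph.dist_le hxy.toWalk
    simpa using this
  calc G.dist x w ≤ G.dist x y + G.dist y w := hG.dist_triangle
    _ ≤ G.dist y w + 1 := by omega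

/-- Along a geodesic from `v` to `w`, the vertex at index `j` is at distance
`t - j` from `w`. -/
lemma geodesic_dist {v w : V} (hG : G.Connected) (p : G.Walk v w)
    (hp : p.length = G.dist v w) :
    ∀ j ≤ p.length, G.dist (p.getVert j) w = p.length - j := by
  -- upper bound, by downward induction
  have hub : ∀ m, ∀ j ≤ p.length, p.length - j = m → G.dist (p.getVert j) w ≤ m := by
    intro m
    induction m with
    | zero =>
      intro j hj hm
      have : j = p.length := by omega
      subst this
      simp [p.getVert_length, SimpleGraph.dist_self]
    | succ m ih =>
      intro j hj hm
      have hjl : j < p.length := by omega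
      have hadj := p.adj_getVert_succ hjl
      have := ih (j + 1) (by omega) (by omega)
      have := adj_dist_le (w := w) hG hadj
      omega
  -- lower bound via triangle inequality and `dist v (getVert j) ≤ j`
  have hlb : ∀ j, G.dist v (p.getVert j) ≤ j := by
    intro j
    induction j with
    | zero => simp [p.getVert_zero, SimpleGraph.dist_self]
    | succ j ih =>
      by_cases hj : j < p.length
      · have hadj := p.adj_getVert_succ hj
        have h2 : G.dist v (p.getVert (j+1)) ≤ G.dist v (p.getVert j) + 1 := by
          calc G.dist v (p.getVert (j+1)) = G.dist (p.getVert (j+1)) v := SimpleGraph.dist_comm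
            _ ≤ G.dist (p.getVert j) v + 1 := adj_dist_le hG (G.adj_symm hadj)
            _ = G.dist v (p.getVert j) + 1 := by rw [SimpleGraph.dist_comm]
        omega
      · have : p.getVert (j + 1) = p.getVert j := by
          rw [p.getVert_of_length_le (by omega), p.getVert_of_length_le (by omega)]
        rw [this]; omega
  intro j hj
  have h1 := hub (p.length - j) j hj rfl
  have h2 : G.dist v w ≤ G.dist v (p.getVert j) + G.dist (p.getVert j) w := hG.dist_triangle
  have h3 := hlb j
  omega

end Dist

section Cascade

variable {V : Type*} [Fintype V] {G : SimpleGraph V} {L : V → Finset ℕ}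

/-- A vertex that can be recoloured. -/
def Unblocked (G : SimpleGraph V) (L : V → Finset ℕ) (c : V → ℕ) (x : V) : Prop :=
  ∃ a ∈ L x, a ≠ c x ∧ ∀ y, G.Adj x y → a ≠ c y

lemma nbr_card (x : V) :
    ((Set.toFinite (G.neighborSet x)).toFinset).card = (G.neighborSet x).ncard :=
  (Set.ncard_eq_toFinset_card _ _).symm

lemma unblocked_of_slack {x : V} (hx : (G.neighborSet x).ncard + 2 ≤ (L x).card)
    (c : V → ℕ) : Unblocked G L c x := by
  classical
  set N := (Set.toFinite (G.neighborSet x)).toFinset with hN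
  set B := insert (c x) (N.image c) with hB
  have hcard : B.card ≤ (G.neighborSet x).ncard + 1 := by
    calc B.card ≤ (N.image c).card + 1 := Finset.card_insert_le _ _
      _ ≤ N.card + 1 := by have := Finset.card_image_le (s := N) (f := c); omega
      _ = (G.neighborSet x).ncard + 1 := by rw [nbr_card]
  have hlt : B.card < (L x).card := by omega
  have : (L x \ B).Nonempty := by
    rw [← Finset.card_pos]
    have := Finset.le_card_sdiff B (L x)
    omega
  obtain ⟨a, ha⟩ := this
  rw [Finset.mem_sdiff] at ha
  refine ⟨a, ha.1, ?_, ?_⟩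
  · intro h; exact ha.2 (by rw [hB, h]; exact Finset.mem_insert_self _ _)
  · intro y hy h
    refine ha.2 ?_
    rw [hB]
    refine Finset.mem_insert_of_mem ?_
    refine Finset.mem_image.2 ⟨y, ?_, h.symm⟩
    rw [hN, Set.Finite.mem_toFinset]
    exact hy

lemma blocked_structure {x : V} (hx : (G.neighborSet x).ncard + 1 ≤ (L x).card)
    {c : V → ℕ} (hc : properL G L c) (hb : ¬ Unblocked G L c x) :
    (∀ y, G.Adj x y → c y ∈ L x) ∧
    (∀ y z, G.Adj x y → G.Adj x z → y ≠ z → c y ≠ c z) := by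
  classical
  set N := (Set.toFinite (G.neighborSet x)).toFinset with hN
  have hmemN : ∀ y, y ∈ N ↔ G.Adj x y := by
    intro y; rw [hN, Set.Finite.mem_toFinset]; rfl
  set B := insert (c x) (N.image c) with hB
  have hsub : L x ⊆ B := by
    intro a ha
    by_contra hnB
    refine hb ⟨a, ha, ?_, ?_⟩
    · intro h; exact hnB (by rw [hB, h]; exact Finset.mem_insert_self _ _)
    · intro y hy h
      exact hnB (by
        rw [hB]
        exact Finset.mem_insert_of_mem (Finset.mem_image.2 ⟨y, (hmemN y).2 hy, h.symm⟩))
  have himle : (N.image c).card ≤ N.card := Finset.card_image_le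
  have hBle : B.card ≤ (N.image c).card + 1 := Finset.card_insert_le _ _
  have hNcard : N.card = (G.neighborSet x).ncard := nbr_card x
  have hLB : (L x).card ≤ B.card := Finset.card_le_card hsub
  have hBeq : L x = B := Finset.eq_of_subset_of_card_le hsub (by omega)
  have himeq : (N.image c).card = N.card := by omega
  have hinj : Set.InjOn c ↑N := Finset.card_image_iff.mp himeq
  constructor
  · intro y hy
    rw [hBeq, hB]
    exact Finset.mem_insert_of_mem (Finset.mem_image.2 ⟨y, (hmemN y).2 hy, rfl⟩)
  · intro y z hy hz hyz h
    exact hyz (hinj (by simpa [hmemN] using hy) (by simpa [hmemN] using hz) h)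

end Cascade

section CascadeMain

variable {V : Type*} [Fintype V] {G : SimpleGraph V} {L : V → Finset ℕ}

/-- The cascade: the colour of any vertex `v` can be changed by a short sequence of
recolourings, all of which happen at `v` or strictly closer to the slack vertex `w`,
with distinct changed vertices at distinct distances from `w`. -/
lemma cascade (hG : G.Connected)
    (h1 : ∀ v, (G.neighborSet v).ncard + 1 ≤ (L v).card)
    {w : V} (hw : (G.neighborSet w).ncard + 2 ≤ (L w).card)
    {c : V → ℕ} (hc : properL G L c) (v : V) :
    ∃ (k : ℕ) (c' : V → ℕ), RSeq G L k c c' ∧ properL G L c' ∧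
      1 ≤ k ∧ k ≤ G.dist v w + 1 ∧
      c' v ≠ c v ∧
      (∀ x, c' x ≠ c x → x = v ∨ G.dist x w < G.dist v w) ∧
      (∀ x y, c' x ≠ c x → c' y ≠ c y → G.dist x w = G.dist y w → x = y) := by
  classical
  obtain ⟨p, hp⟩ := hG.exists_walk_length_eq_dist v w
  set t := p.length with ht
  set q : ℕ → V := fun j => p.getVert j with hq
  have hq0 : q 0 = v := p.getVert_zero
  have hqt : q t = w := p.getVert_length
  have dq : ∀ j ≤ t, G.dist (q j) w = t - j := geodesic_dist hG p hp
  have aq : ∀ j < t, G.Adj (q j) (q (j + 1)) := fun j hj => p.adj_getVert_succ hj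
  have qinj : ∀ j₁ j₂, j₁ ≤ t → j₂ ≤ t → q j₁ = q j₂ → j₁ = j₂ := by
    intro j₁ j₂ h₁ h₂ he
    have e1 := dq j₁ h₁
    have e2 := dq j₂ h₂
    rw [he] at e1
    omega
  -- the first unblocked vertex along the path
  have hQt : Unblocked G L c (q t) := by
    rw [hqt]; exact unblocked_of_slack hw c
  have hex : ∃ i, Unblocked G L c (q i) := ⟨t, hQt⟩
  set i₀ := Nat.find hex with hi₀def
  have hi₀ : Unblocked G L c (q i₀) := Nat.find_spec hex
  have hmin : ∀ j < i₀, ¬ Unblocked G L c (q j) := fun j hj => Nat.find_min hex hj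
  have hi₀t : i₀ ≤ t := Nat.find_le hQt
  obtain ⟨astar, hastarL, hastar_ne, hastar_avoid⟩ := hi₀
  -- blocked structure for vertices before i₀
  have hbl : ∀ j < i₀, (∀ y, G.Adj (q j) y → c y ∈ L (q j)) ∧
      (∀ y z, G.Adj (q j) y → G.Adj (q j) z → y ≠ z → c y ≠ c z) :=
    fun j hj => blocked_structure (h1 (q j)) hc (hmin j hj)
  -- the sequence of recolourings
  set F : ℕ → V → ℕ := fun s => Nat.rec c
    (fun s' prev => Function.update prev (q (i₀ - s'))
      (if s' = 0 then astar else c (q (i₀ - s' + 1)))) s with hF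
  have hF0 : F 0 = c := rfl
  have hFs : ∀ s, F (s + 1) = Function.update (F s) (q (i₀ - s))
      (if s = 0 then astar else c (q (i₀ - s + 1))) := fun s => rfl
  -- untouched vertices keep their colour
  have L1 : ∀ s, s ≤ i₀ + 1 → ∀ x, (∀ j, j ≤ i₀ → i₀ < j + s → x ≠ q j) → F s x = c x := by
    intro s
    induction s with
    | zero => intro _ x _; rw [hF0]
    | succ s ih =>
      intro hs x hx
      rw [hFs s, Function.update_of_ne (hx (i₀ - s) (by omega) (by omega))]
      exact ih (by omega) x (fun j hj hjs => hx j hj (by omega))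
  -- the value at `q i₀`
  have L2a : ∀ s, 1 ≤ s → s ≤ i₀ + 1 → F s (q i₀) = astar := by
    intro s
    induction s with
    | zero => omega
    | succ s ih =>
      intro _ hs
      by_cases hs0 : s = 0
      · subst hs0
        rw [hFs 0]
        simp
      · have hne : q i₀ ≠ q (i₀ - s) := by
          intro he
          have := qinj _ _ hi₀t (by omega) he
          omega
        rw [hFs s, Function.update_of_ne hne]
        exact ih (by omega) (by omega)
  -- the value at earlier path vertices
  have L2b : ∀ s, s ≤ i₀ + 1 → ∀ j, j < i₀ → i₀ < j + s → F s (q j) = c (q (j + 1)) := by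
    intro s
    induction s with
    | zero => omega
    | succ s ih =>
      intro hs j hj hjs
      by_cases he : j = i₀ - s
      · have hs0 : s ≠ 0 := by omega
        rw [hFs s, he, Function.update_self, if_neg hs0]
      · have hne : q j ≠ q (i₀ - s) := by
          intro hqe
          exact he (qinj _ _ (by omega) (by omega) hqe)
        rw [hFs s, Function.update_of_ne hne]
        exact ih (by omega) j hj (by omega)
  -- validity of each step
  have key : ∀ s, s ≤ i₀ → properL G L (F s) → recolStep G L (F s) (F (s + 1)) := by
    intro s hs hFp
    have hxval : F s (q (i₀ - s)) = c (q (i₀ - s)) := by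
      refine L1 s (by omega) _ (fun l hl hls he => ?_)
      have := qinj _ _ (by omega) (by omega) he
      omega
    rw [hFs s]
    by_cases hs0 : s = 0
    · subst hs0
      rw [if_pos rfl]
      simp only [Nat.sub_zero]
      rw [hF0]
      exact recolStep_update hc hastarL hastar_ne (fun y hy => hastar_avoid y hy)
    · rw [if_neg hs0]
      set j := i₀ - s with hjdef
      have hji : j < i₀ := by omega
      have hjt : j < t := by omega
      obtain ⟨B1, B2⟩ := hbl j hji
      have hadjj : G.Adj (q j) (q (j + 1)) := aq j hjt
      refine recolStep_update hFp (B1 _ hadjj) ?_ ?_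
      · rw [hxval]
        exact fun h => (hc.2 hadjj) h.symm
      · intro y hy
        by_cases hyq : y = q (j + 1)
        · subst hyq
          by_cases hji1 : j + 1 = i₀
          · rw [hji1, L2a s (by omega) (by omega)]
            exact fun h => hastar_ne h.symm
          · have hj1 : j + 1 < i₀ := by omega
            rw [L2b s (by omega) (j + 1) hj1 (by omega)]
            exact hc.2 (aq (j + 1) (by omega))
        · have hyun : F s y = c y := by
            refine L1 s (by omega) y (fun l hl hls he => ?_)
            subst he
            have hdy := dq l (by omega)
            have hd := adj_dist_le (w := w) hG hy
            rw [dq j (by omega), hdy] at hd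
            have hl1 : l = j + 1 := by omega
            exact hyq (by rw [hl1])
          rw [hyun]
          exact B2 _ _ hadjj hy (fun h => hyq h.symm)
  -- build the sequence
  have seq : ∀ s, s ≤ i₀ + 1 → RSeq G L s c (F s) ∧ properL G L (F s) := by
    intro s
    induction s with
    | zero => exact fun _ => ⟨RSeq.zero c, hF0 ▸ hc⟩
    | succ s ih =>
      intro hs
      obtain ⟨sq, pr⟩ := ih (by omega)
      have st := key s (by omega) pr
      exact ⟨sq.trans (RSeq.single st), st.2.1⟩
  obtain ⟨sq, pr⟩ := seq (i₀ + 1) (le_refl _)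
  have hchg : ∀ x, F (i₀ + 1) x ≠ c x → ∃ l, l ≤ i₀ ∧ x = q l := by
    intro x hx
    by_contra hno
    push_neg at hno
    exact hx (L1 (i₀ + 1) (le_refl _) x (fun l hl _ => hno l hl))
  have hdv : G.dist v w = t := hp.symm
  have hcv : F (i₀ + 1) (q 0) ≠ c (q 0) := by
    by_cases h0 : i₀ = 0
    · rw [show (0 : ℕ) = i₀ from h0.symm, L2a (i₀ + 1) (by omega) (le_refl _)]
      exact hastar_ne
    · rw [L2b (i₀ + 1) (le_refl _) 0 (by omega) (by omega)]
      exact fun h => hc.2 (aq 0 (by omega)) h.symm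
  refine ⟨i₀ + 1, F (i₀ + 1), sq, pr, by omega, by omega, ?_, ?_, ?_⟩
  · rw [← hq0]
    exact hcv
  · intro x hx
    obtain ⟨l, hl, rfl⟩ := hchg x hx
    by_cases h0 : l = 0
    · left
      rw [h0, hq0]
    · right
      rw [dq l (by omega), hdv]
      omega
  · intro x y hx hy hdxy
    obtain ⟨l, hl, rfl⟩ := hchg x hx
    obtain ⟨l', hl', rfl⟩ := hchg y hy
    rw [dq l (by omega), dq l' (by omega)] at hdxy
    have : l = l' := by omega
    rw [this]

end CascadeMain

section Clear

variable {V : Type*} [Fintype V] {G : SimpleGraph V} {L : V → Finset ℕ}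

/-- Recolour the far-away vertex `u` to `cstar` when at most one neighbour of `u`
currently has colour `cstar`. -/
lemma clear_vertex (hG : G.Connected)
    (h1 : ∀ v, (G.neighborSet v).ncard + 1 ≤ (L v).card)
    {w : V} (hw : (G.neighborSet w).ncard + 2 ≤ (L w).card)
    {u : V} (hud : ∀ x, G.dist x w ≤ G.dist u w)
    {cstar : ℕ} (hcL : cstar ∈ L u)
    {c : V → ℕ} (hc : properL G L c)
    (huniq : ∀ x y, G.Adj u x → G.Adj u y → c x = cstar → c y = cstar → x = y) :
    ∃ (k : ℕ) (c₂ : V → ℕ), RSeq G L k c c₂ ∧ properL G L c₂ ∧ c₂ u = cstar ∧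
      k ≤ 2 * G.dist u w + 2 ∧
      ((c u = cstar ∨ ∀ x, G.Adj u x → c x ≠ cstar) → k ≤ 1) := by
  classical
  set d := G.dist u w with hd
  by_cases hu : c u = cstar
  · exact ⟨0, c, RSeq.zero c, hc, hu, by omega, fun _ => by omega⟩
  by_cases hno : ∀ x, G.Adj u x → c x ≠ cstar
  · have hstep : recolStep G L c (Function.update c u cstar) :=
      recolStep_update hc hcL (fun h => hu h.symm) (fun y hy h => hno y hy h.symm)
    exact ⟨1, _, RSeq.single hstep, hstep.2.1, Function.update_self _ _ _, by omega,
      fun _ => le_refl 1⟩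
  push_neg at hno
  obtain ⟨v, hv, hvc⟩ := hno
  have huv : u ≠ v := fun h => hu (h ▸ hvc)
  obtain ⟨k₁, c', seq₁, pr₁, hk₁1, hk₁, hch₁, hloc₁, hinj₁⟩ := cascade hG h1 hw hc v
  have hvd : G.dist v w ≤ d := hud v
  have hadj_ge : ∀ x, G.Adj u x → d ≤ G.dist x w + 1 := by
    intro x hx
    exact hd ▸ adj_dist_le (w := w) hG hx
  have hc'u : c' u = c u := by
    by_contra h
    rcases hloc₁ u h with rfl | hlt
    · exact hu hvc
    · have := hud u
      omega
  -- after the first cascade, any `cstar`-coloured neighbour of `u` is a changed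
  -- vertex at distance `d - 1`
  have claimA : ∀ x, G.Adj u x → c' x = cstar →
      (c' x ≠ c x ∧ x ≠ v ∧ G.dist x w + 1 = d ∧ G.dist v w = d) := by
    intro x hx hxc
    have hchx : c' x ≠ c x := by
      intro he
      have : x = v := huniq x v hx hv (he ▸ hxc) hvc
      subst this
      exact hch₁ he
    have hxv : x ≠ v := by
      intro he
      subst he
      exact hch₁ (by rw [hxc, hvc])
    have hlt : G.dist x w < G.dist v w := (hloc₁ x hchx).resolve_left hxv
    have := hadj_ge x hx
    refine ⟨hchx, hxv, by omega, by omega⟩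
  by_cases h2 : ∃ x, G.Adj u x ∧ c' x = cstar
  · obtain ⟨x₀, hx₀a, hx₀c⟩ := h2
    obtain ⟨hch₀, hx₀v, hx₀d, hvd'⟩ := claimA x₀ hx₀a hx₀c
    obtain ⟨k₂, c'', seq₂, pr₂, hk₂1, hk₂, hch₂, hloc₂, hinj₂⟩ := cascade hG h1 hw pr₁ x₀
    have hc''u : c'' u = c u := by
      rw [← hc'u]
      by_contra h
      rcases hloc₂ u h with rfl | hlt
      · exact hu (hc'u ▸ hx₀c)
      · have := hud u
        omega
    have claimB : ∀ x, G.Adj u x → c'' x ≠ cstar := by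
      intro x hx hxc
      by_cases he : c'' x = c' x
      · have hxc' : c' x = cstar := he ▸ hxc
        obtain ⟨hchx, hxv, hxd, _⟩ := claimA x hx hxc'
        have : x = x₀ := hinj₁ x x₀ hchx hch₀ (by omega)
        subst this
        exact hch₂ (he ▸ hxc ▸ hx₀c.symm ▸ rfl)
      · rcases hloc₂ x he with rfl | hlt
        · exact he (hxc.trans hx₀c.symm)
        · have := hadj_ge x hx
          omega
    have hstep : recolStep G L c'' (Function.update c'' u cstar) :=
      recolStep_update pr₂ hcL (fun h => hu (hc''u ▸ h.symm))
        (fun y hy h => claimB y hy h.symm)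
    refine ⟨k₁ + k₂ + 1, _, (seq₁.trans seq₂).trans (RSeq.single hstep), hstep.2.1,
      Function.update_self _ _ _, by omega, fun h => ?_⟩
    rcases h with h | h
    · exact absurd h hu
    · exact absurd hvc (h v hv)
  · push_neg at h2
    have hstep : recolStep G L c' (Function.update c' u cstar) :=
      recolStep_update pr₁ hcL (fun h => hu (hc'u ▸ h.symm))
        (fun y hy h => h2 y hy h.symm)
    refine ⟨k₁ + 1, _, seq₁.trans (RSeq.single hstep), hstep.2.1,
      Function.update_self _ _ _, by omega, fun h => ?_⟩
    rcases h with h | h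
    · exact absurd h hu
    · exact absurd hvc (h v hv)

end Clear

section MainAux

variable {V : Type*} [Fintype V] {G : SimpleGraph V} {L : V → Finset ℕ}

lemma sum_fibers_le (N : Finset V) (Lu : Finset ℕ) (γ : V → ℕ) :
    ∑ a ∈ Lu, (N.filter (fun x => γ x = a)).card ≤ N.card := by
  classical
  have h : (N.filter (fun x => γ x ∈ Lu)).card
      = ∑ a ∈ Lu, ((N.filter (fun x => γ x ∈ Lu)).filter (fun x => γ x = a)).card :=
    Finset.card_eq_sum_card_fiberwise (fun x hx => (Finset.mem_filter.1 hx).2)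
  have h2 : ∀ a ∈ Lu, (N.filter (fun x => γ x ∈ Lu)).filter (fun x => γ x = a)
      = N.filter (fun x => γ x = a) := by
    intro a ha
    rw [Finset.filter_filter]
    apply Finset.filter_congr
    intro x _
    constructor
    · exact fun hx => hx.2
    · exact fun hx => ⟨hx ▸ ha, hx⟩
  calc ∑ a ∈ Lu, (N.filter (fun x => γ x = a)).card
      = ∑ a ∈ Lu, ((N.filter (fun x => γ x ∈ Lu)).filter (fun x => γ x = a)).card := by
        refine Finset.sum_congr rfl (fun a ha => ?_)
        rw [h2 a ha]
    _ = (N.filter (fun x => γ x ∈ Lu)).card := h.symm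
    _ ≤ N.card := Finset.card_le_card (Finset.filter_subset _ _)

lemma averaging (u : V) (h1u : (G.neighborSet u).ncard + 1 ≤ (L u).card) (α β : V → ℕ) :
    ∃ cstar ∈ L u,
      (((Set.toFinite (G.neighborSet u)).toFinset).filter (fun x => α x = cstar)).card
      + (((Set.toFinite (G.neighborSet u)).toFinset).filter (fun x => β x = cstar)).card ≤ 1 := by
  classical
  set N := (Set.toFinite (G.neighborSet u)).toFinset with hN
  have hNc : N.card = (G.neighborSet u).ncard := nbr_card u
  by_contra hcon
  push_neg at hcon
  have hall : ∀ a ∈ L u, 2 ≤ (N.filter (fun x => α x = a)).card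
      + (N.filter (fun x => β x = a)).card := fun a ha => hcon a ha
  have hsum : (L u).card * 2 ≤ ∑ a ∈ L u, ((N.filter (fun x => α x = a)).card
      + (N.filter (fun x => β x = a)).card) := by
    calc (L u).card * 2 = (L u).card • 2 := by rw [smul_eq_mul]
      _ ≤ ∑ a ∈ L u, ((N.filter (fun x => α x = a)).card
          + (N.filter (fun x => β x = a)).card) := Finset.card_nsmul_le_sum _ _ _ hall
  rw [Finset.sum_add_distrib] at hsum
  have ha := sum_fibers_le N (L u) α
  have hb := sum_fibers_le N (L u) β
  omega

lemma dist_lt_card (hG : G.Connected) (x y : V) : G.dist x y < Fintype.card V := by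
  classical
  obtain ⟨p, hp⟩ := hG.exists_walk_length_eq_dist x y
  have dq := geodesic_dist hG p hp
  have hinj : Function.Injective (fun i : Fin (p.length + 1) => p.getVert i) := by
    intro a b hab
    have e1 := dq a (by omega)
    have e2 := dq b (by omega)
    simp only at hab
    rw [hab] at e1
    have : (a : ℕ) = b := by omega
    exact Fin.ext this
  have := Fintype.card_le_of_injective _ hinj
  rw [Fintype.card_fin] at this
  omega

lemma reachable_induce {s : Set V} :
    ∀ {x y : V} (p : G.Walk x y) (hx : x ∈ s) (hy : y ∈ s),
      (∀ z ∈ p.support, z ∈ s) → (G.induce s).Reachable ⟨x, hx⟩ ⟨y, hy⟩ := by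
  intro x y p
  induction p with
  | nil => intro hx hy _; rfl
  | @cons x x' y hadj q ih =>
    intro hx hy hsup
    have hx' : x' ∈ s := hsup x' (by simp [SimpleGraph.Walk.support_cons])
    have step : (G.induce s).Adj ⟨x, hx⟩ ⟨x', hx'⟩ := by
      simp only [SimpleGraph.comap_adj, Function.Embedding.coe_subtype]
      exact hadj
    exact (step.reachable).trans
      (ih hx' hy (fun z hz => hsup z (by simp [SimpleGraph.Walk.support_cons, hz])))

end MainAux

universe u

lemma main_aux : ∀ (n : ℕ), ∀ {V : Type u} [Fintype V], Fintype.card V = n →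
    ∀ (G : SimpleGraph V), G.Connected → ∀ (L : V → Finset ℕ),
    (∀ v, (G.neighborSet v).ncard + 1 ≤ (L v).card) →
    (∃ w, (G.neighborSet w).ncard + 2 ≤ (L w).card) →
    ∀ α β : V → ℕ, properL G L α → properL G L β →
    ∃ k : ℕ, RSeq G L k α β ∧ 2 * k ≤ 3 * n ^ 2 + 5 * n := by
  intro n
  induction n using Nat.strong_induction_on with
  | _ n ih =>
  intro V _ hcard G hG L h1 h2 α β hα hβ
  classical
  rcases Nat.lt_or_ge n 2 with hn2 | hn2
  · -- base case : at most one vertex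
    have hpos : 0 < Fintype.card V := @Fintype.card_pos V _ hG.nonempty
    have hn1 : n = 1 := by omega
    subst hn1
    have hsub : Subsingleton V :=
      Fintype.card_le_one_iff_subsingleton.mp (le_of_eq hcard)
    by_cases hab : α = β
    · subst hab
      exact ⟨0, RSeq.zero α, by omega⟩
    · have hx : ∃ x, α x ≠ β x := by
        by_contra h
        push_neg at h
        exact hab (funext h)
      obtain ⟨x, hx⟩ := hx
      exact ⟨1, RSeq.single ⟨hα, hβ, x, hx, fun y hy =>
        absurd (Subsingleton.elim y x) hy⟩, by omega⟩
  -- main case : n ≥ 2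
  obtain ⟨w, hw⟩ := h2
  obtain ⟨u, -, hud'⟩ := Finset.exists_max_image (Finset.univ : Finset V)
    (fun x => G.dist x w) ⟨w, Finset.mem_univ w⟩
  have hud : ∀ x, G.dist x w ≤ G.dist u w := fun x => hud' x (Finset.mem_univ x)
  set d := G.dist u w with hd
  have hd1 : 1 ≤ d := by
    by_contra h
    have hall : ∀ x : V, x = w := by
      intro x
      have hx0 : G.dist x w = 0 := by have := hud x; omega
      exact (hG.dist_eq_zero_iff).mp hx0
    have : Fintype.card V ≤ 1 :=
      Fintype.card_le_one_iff.mpr (fun a b => (hall a).trans (hall b).symm)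
    omega
  have huw : u ≠ w := by
    intro h
    have : G.dist u w = 0 := by rw [h]; exact SimpleGraph.dist_self
    omega
  -- choose the colour cstar
  obtain ⟨cstar, hcstarL, hcount⟩ := averaging u (h1 u) α β
  set N := (Set.toFinite (G.neighborSet u)).toFinset with hN
  have hmemN : ∀ y, y ∈ N ↔ G.Adj u y := by
    intro y; rw [hN, Set.Finite.mem_toFinset]; rfl
  have huniq : ∀ (γ : V → ℕ), (N.filter (fun z => γ z = cstar)).card ≤ 1 →
      ∀ x y, G.Adj u x → G.Adj u y → γ x = cstar → γ y = cstar → x = y := by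
    intro γ hγ x y hx hy hxc hyc
    by_contra hxy
    have hmx : x ∈ N.filter (fun z => γ z = cstar) :=
      Finset.mem_filter.2 ⟨(hmemN x).2 hx, hxc⟩
    have hmy : y ∈ N.filter (fun z => γ z = cstar) :=
      Finset.mem_filter.2 ⟨(hmemN y).2 hy, hyc⟩
    have : 1 < (N.filter (fun z => γ z = cstar)).card :=
      Finset.one_lt_card.2 ⟨x, hmx, y, hmy, hxy⟩
    omega
  obtain ⟨ka, α₁, seqa, pra, hau, hka, hbona⟩ :=
    clear_vertex hG h1 hw hud hcstarL hα (huniq α (by omega))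
  obtain ⟨kb, β₁, seqb, prb, hbu, hkb, hbonb⟩ :=
    clear_vertex hG h1 hw hud hcstarL hβ (huniq β (by omega))
  have hsmall : ka ≤ 1 ∨ kb ≤ 1 := by
    have hzero : (N.filter (fun z => α z = cstar)).card = 0 ∨
        (N.filter (fun z => β z = cstar)).card = 0 := by omega
    rcases hzero with h | h
    · left
      refine hbona (Or.inr (fun x hx hxc => ?_))
      have hmem : x ∈ N.filter (fun z => α z = cstar) :=
        Finset.mem_filter.2 ⟨(hmemN x).2 hx, hxc⟩
      rw [Finset.card_eq_zero.mp h] at hmem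
      exact Finset.notMem_empty x hmem
    · right
      refine hbonb (Or.inr (fun x hx hxc => ?_))
      have hmem : x ∈ N.filter (fun z => β z = cstar) :=
        Finset.mem_filter.2 ⟨(hmemN x).2 hx, hxc⟩
      rw [Finset.card_eq_zero.mp h] at hmem
      exact Finset.notMem_empty x hmem
  -- the induced graph on the complement of u
  set s : Set V := {x | x ≠ u} with hs
  have hws : w ∈ s := Ne.symm huw
  set G' : SimpleGraph s := G.induce s with hG'def
  have hadj' : ∀ a b : s, G'.Adj a b ↔ G.Adj ↑a ↑b := fun a b => Iff.rfl
  -- connectivity of the induced graph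
  have hreach : ∀ a : s, G'.Reachable a ⟨w, hws⟩ := by
    intro a
    obtain ⟨p, hp⟩ := hG.exists_walk_length_eq_dist (↑a) w
    have hsup : ∀ z ∈ p.support, z ∈ s := by
      intro z hz
      obtain ⟨j, hjz, hjl⟩ := SimpleGraph.Walk.mem_support_iff_exists_getVert.mp hz
      have hdz := geodesic_dist hG p hp j hjl
      rw [hjz] at hdz
      show z ≠ u
      intro hzu
      have hpl : p.length ≤ d := by rw [hp]; exact hud ↑a
      rw [hzu] at hdz
      have hj0 : j = 0 ∧ p.length = d := by omega
      have : z = ↑a := by rw [← hjz, hj0.1, p.getVert_zero]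
      exact a.2 (by rw [← this, hzu])
    exact reachable_induce p a.2 hws hsup
  have hG'conn : G'.Connected := by
    rw [SimpleGraph.connected_iff]
    exact ⟨fun a b => (hreach a).trans (hreach b).symm, ⟨⟨w, hws⟩⟩⟩
  -- cardinality
  have hcard' : Fintype.card s = n - 1 := by
    have e0 : Fintype.card s = Fintype.card {x : V // ¬ x = u} :=
      Fintype.card_congr (Equiv.subtypeEquivRight (fun x => Iff.rfl))
    have e : Fintype.card {x : V // ¬ x = u}
        = Fintype.card V - Fintype.card {x : V // x = u} :=
      Fintype.card_subtype_compl _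
    rw [Fintype.card_subtype_eq] at e
    rw [e0, e, hcard]
  -- the new lists
  set L' : s → Finset ℕ := fun x => if G.Adj u ↑x then (L ↑x).erase cstar else L ↑x with hL'
  have hsub_l : ∀ x : s, L' x ⊆ L ↑x := by
    intro x
    by_cases h : G.Adj u ↑x
    · simp only [hL', if_pos h]
      exact Finset.erase_subset _ _
    · simp only [hL', if_neg h]
      exact subset_rfl
  have hmem_l : ∀ (x : s) (a : ℕ), a ∈ L ↑x → (G.Adj u ↑x → a ≠ cstar) → a ∈ L' x := by
    intro x a ha hne
    by_cases h : G.Adj u ↑x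
    · simp only [hL', if_pos h]
      exact Finset.mem_erase_of_ne_of_mem (hne h) ha
    · simp only [hL', if_neg h]
      exact ha
  have hnotc : ∀ (x : s) (a : ℕ), a ∈ L' x → G.Adj u ↑x → a ≠ cstar := by
    intro x a ha h
    rw [hL'] at ha
    simp only [if_pos h] at ha
    exact Finset.ne_of_mem_erase ha
  -- neighbour counts
  have hncard' : ∀ x : s, (G'.neighborSet x).ncard = ((G.neighborSet ↑x) \ {u}).ncard := by
    intro x
    have himg : Subtype.val '' (G'.neighborSet x) = G.neighborSet ↑x \ {u} := by
      ext z
      simp only [Set.mem_image, SimpleGraph.mem_neighborSet, Set.mem_diff,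
        Set.mem_singleton_iff]
      constructor
      · rintro ⟨z', hz', rfl⟩
        exact ⟨(hadj' x z').mp hz', z'.2⟩
      · rintro ⟨hz, hzu⟩
        exact ⟨⟨z, hzu⟩, (hadj' x ⟨z, hzu⟩).mpr hz, rfl⟩
    rw [← himg, Set.ncard_image_of_injective _ Subtype.val_injective]
  have hdiff : ∀ x : s, G.Adj u ↑x →
      ((G.neighborSet ↑x) \ {u}).ncard + 1 = (G.neighborSet ↑x).ncard := by
    intro x h
    have hu_mem : u ∈ G.neighborSet ↑x := G.adj_symm h
    have e : ((G.neighborSet ↑x) \ {u}).ncard = (G.neighborSet ↑x).ncard - 1 :=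
      Set.ncard_diff_singleton_of_mem hu_mem
    have hpos : 1 ≤ (G.neighborSet ↑x).ncard := by
      by_contra hc
      have h0 : (G.neighborSet ↑x).ncard = 0 := by omega
      rw [Set.ncard_eq_zero (Set.toFinite _)] at h0
      rw [h0] at hu_mem
      exact hu_mem
    omega
  have hsame : ∀ x : s, ¬ G.Adj u ↑x →
      ((G.neighborSet ↑x) \ {u}) = G.neighborSet ↑x := by
    intro x h
    rw [Set.diff_singleton_eq_self]
    exact fun hu_mem => h (G.adj_symm hu_mem)
  have h1' : ∀ x : s, (G'.neighborSet x).ncard + 1 ≤ (L' x).card := by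
    intro x
    rw [hncard' x]
    by_cases h : G.Adj u ↑x
    · have e := hdiff x h
      have hLe := Finset.pred_card_le_card_erase (s := L ↑x) (a := cstar)
      have h1x := h1 ↑x
      simp only [hL', if_pos h]
      omega
    · rw [hsame x h]
      simp only [hL', if_neg h]
      exact h1 ↑x
  have h2' : ∃ x : s, (G'.neighborSet x).ncard + 2 ≤ (L' x).card := by
    refine ⟨⟨w, hws⟩, ?_⟩
    rw [hncard' _]
    by_cases h : G.Adj u w
    · have e := hdiff ⟨w, hws⟩ h
      have hLe := Finset.pred_card_le_card_erase (s := L w) (a := cstar)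
      simp only [hL', if_pos h]
      simp only [Subtype.coe_mk] at e ⊢
      omega
    · rw [hsame ⟨w, hws⟩ h]
      simp only [hL', if_neg h]
      exact hw
  -- restrictions of α₁ and β₁
  have hrestrict : ∀ γ : V → ℕ, properL G L γ → γ u = cstar →
      properL G' L' (fun x : s => γ ↑x) := by
    intro γ hγ hγu
    constructor
    · intro x
      refine hmem_l x _ (hγ.1 ↑x) (fun hadj heq => ?_)
      exact (hγ.2 hadj) (hγu.trans heq.symm)
    · intro a b hab
      exact hγ.2 ((hadj' a b).mp hab)
  obtain ⟨k', ⟨f', hf0, hfk, hstep'⟩, hk'⟩ := ih (n - 1) (by omega) hcard' G' hG'conn L'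
    h1' h2' (fun x : s => α₁ ↑x) (fun x : s => β₁ ↑x)
    (hrestrict α₁ pra hau) (hrestrict β₁ prb hbu)
  -- lifting back
  set extc : (s → ℕ) → (V → ℕ) := fun g x => if h : x = u then cstar else g ⟨x, h⟩
    with hextc
  have hproper_ext : ∀ g : s → ℕ, properL G' L' g → properL G L (extc g) := by
    intro g hg
    constructor
    · intro x
      by_cases h : x = u
      · simp only [hextc, dif_pos h]
        rw [h]
        exact hcstarL
      · simp only [hextc, dif_neg h]
        exact hsub_l ⟨x, h⟩ (hg.1 ⟨x, h⟩)
    · intro x y hxy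
      by_cases hx : x = u
      · have hy : y ≠ u := fun h => G.ne_of_adj hxy (hx.trans h.symm)
        simp only [hextc, dif_pos hx, dif_neg hy]
        have hadjuy : G.Adj u y := hx ▸ hxy
        exact fun h => (hnotc ⟨y, hy⟩ _ (hg.1 ⟨y, hy⟩) hadjuy) h.symm
      · by_cases hy : y = u
        · simp only [hextc, dif_neg hx, dif_pos hy]
          have hadjux : G.Adj u x := G.adj_symm (hy ▸ hxy)
          exact hnotc ⟨x, hx⟩ _ (hg.1 ⟨x, hx⟩) hadjux
        · simp only [hextc, dif_neg hx, dif_neg hy]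
          exact hg.2 ((hadj' ⟨x, hx⟩ ⟨y, hy⟩).mpr hxy)
  have hstep_ext : ∀ g g' : s → ℕ, recolStep G' L' g g' →
      recolStep G L (extc g) (extc g') := by
    rintro g g' ⟨hg, hg', x, hx, ho⟩
    refine ⟨hproper_ext g hg, hproper_ext g' hg', ↑x, ?_, ?_⟩
    · simp only [hextc, dif_neg x.2, Subtype.coe_eta]
      exact hx
    · intro y hy
      by_cases h : y = u
      · simp [hextc, h]
      · simp only [hextc, dif_neg h]
        exact ho ⟨y, h⟩ (fun he => hy (congrArg Subtype.val he))
  have hext_eq : ∀ γ : V → ℕ, γ u = cstar → extc (fun x : s => γ ↑x) = γ := by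
    intro γ hγu
    funext x
    by_cases h : x = u
    · simp only [hextc, dif_pos h]
      rw [h]
      exact hγu.symm
    · simp only [hextc, dif_neg h]
  have seq_mid : RSeq G L k' α₁ β₁ := by
    refine ⟨fun i => extc (f' i), ?_, ?_, fun i hi => hstep_ext _ _ (hstep' i hi)⟩
    · show extc (f' 0) = α₁
      rw [hf0]
      exact hext_eq α₁ hau
    · show extc (f' k') = β₁
      rw [hfk]
      exact hext_eq β₁ hbu
  refine ⟨ka + k' + kb, (seqa.trans seq_mid).trans seqb.symm, ?_⟩
  -- arithmetic
  have hdn : d ≤ n - 1 := by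
    have := dist_lt_card hG u w
    omega
  obtain ⟨m, rfl⟩ : ∃ m, n = m + 2 := ⟨n - 2, by omega⟩
  have e1 : (m + 2) ^ 2 = m ^ 2 + 4 * m + 4 := by ring
  have e2 : (m + 2 - 1) ^ 2 = m ^ 2 + 2 * m + 1 := by
    rw [show m + 2 - 1 = m + 1 from rfl]; ring
  have hkk : ka + kb ≤ 2 * d + 3 := by omega
  omega

theorem stmt6 {V : Type*} [Fintype V] (G : SimpleGraph V) (hG : G.Connected)
    (L : V → Finset ℕ)
    (h1 : ∀ v, (G.neighborSet v).ncard + 1 ≤ (L v).card)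
    (h2 : ∃ w, (G.neighborSet w).ncard + 2 ≤ (L w).card)
    (α β : V → ℕ) (hα : properL G L α) (hβ : properL G L β) :
    ∃ (k : ℕ) (f : ℕ → V → ℕ),
      2 * k ≤ 3 * (Fintype.card V) ^ 2 + 5 * Fintype.card V ∧
      f 0 = α ∧ f k = β ∧ ∀ i < k, recolStep G L (f i) (f (i + 1)) := by
  obtain ⟨k, ⟨f, hf0, hfk, hstep⟩, hk⟩ :=
    main_aux (Fintype.card V) rfl G hG L h1 h2 α β hα hβ
  exact ⟨k, f, hk, hf0, hfk, hstep⟩
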